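/- arXiv:2104.13419 — 3 statements merged into one kernel-verified Lean document; each statement's English description precedes it below -/
import Mathlib

section
/- Let n, p be positive integers, X an n×p real matrix with rows x₁ᵀ,…,xₙᵀ, B a p×p symmetric positive definite matrix, b ∈ ℝᵖ, and y ∈ {0,1}ⁿ. There exists a finite constant c > 0, not depending on w, such that for every w ∈ (0,∞)ⁿ, ∫_{ℝᵖ} π(β|w) · π(w|β) dβ ≤ c ∏_{i=1}^n g(wᵢ), where π(β|w) = (2π)^{−p/2} det(Σ(w))^{−1/2} exp{−(1/2)(β−μ(w))ᵀ Σ(w)⁻¹ (β−μ(w))} and π(w|β) = ∏_{i=1}^n cosh(|xᵢᵀβ|/2) exp{−(xᵢᵀβ)² wᵢ/2} g(wᵢ). -/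
open MeasureTheory Matrix Real

/-- The density of the Pólya-Gamma PG(1,0) distribution. -/
noncomputable def pgDensity (z : ℝ) : ℝ :=
  ∑' k : ℕ, (-1 : ℝ) ^ k * (2 * (k : ℝ) + 1) / Real.sqrt (2 * Real.pi * z ^ 3) *
    Real.exp (-(2 * (k : ℝ) + 1) ^ 2 / (8 * z))

/-- Σ(w) = (Xᵀ Ω(w) X + B⁻¹)⁻¹, with Ω(w) = diag(w₁,…,wₙ). -/
noncomputable def sigmaMat {n p : ℕ} (X : Matrix (Fin n) (Fin p) ℝ)
    (B : Matrix (Fin p) (Fin p) ℝ) (w : Fin n → ℝ) : Matrix (Fin p) (Fin p) ℝ :=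
  (Xᵀ * Matrix.diagonal w * X + B⁻¹)⁻¹

/-- μ(w) = Σ(w)[Xᵀ(y − (1/2)1ₙ) + B⁻¹b]. -/
noncomputable def muVec {n p : ℕ} (X : Matrix (Fin n) (Fin p) ℝ)
    (B : Matrix (Fin p) (Fin p) ℝ) (b : Fin p → ℝ) (y : Fin n → ℝ) (w : Fin n → ℝ) :
    Fin p → ℝ :=
  (sigmaMat X B w) *ᵥ (Xᵀ *ᵥ (fun i => y i - 1 / 2) + B⁻¹ *ᵥ b)

/-- π(β|w) : the N_p(μ(w), Σ(w)) density at β. -/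
noncomputable def piBeta {n p : ℕ} (X : Matrix (Fin n) (Fin p) ℝ)
    (B : Matrix (Fin p) (Fin p) ℝ) (b : Fin p → ℝ) (y : Fin n → ℝ)
    (w : Fin n → ℝ) (β : Fin p → ℝ) : ℝ :=
  (2 * Real.pi) ^ (-(p : ℝ) / 2) * (sigmaMat X B w).det ^ (-(1 : ℝ) / 2) *
    Real.exp (-(1 / 2) *
      ((β - muVec X B b y w) ⬝ᵥ ((sigmaMat X B w)⁻¹ *ᵥ (β - muVec X B b y w))))

/-- π(w|β) = ∏ᵢ cosh(|xᵢᵀβ|/2) exp{−(xᵢᵀβ)² wᵢ/2} g(wᵢ). -/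
noncomputable def piW {n p : ℕ} (X : Matrix (Fin n) (Fin p) ℝ)
    (w : Fin n → ℝ) (β : Fin p → ℝ) : ℝ :=
  ∏ i, (Real.cosh (|(X *ᵥ β) i| / 2) * Real.exp (-((X *ᵥ β) i) ^ 2 * w i / 2) *
    pgDensity (w i))

noncomputable def en {p : ℕ} (v : Fin p → ℝ) : ℝ := Real.sqrt (v ⬝ᵥ v)

lemma dot_self_nonneg {p : ℕ} (v : Fin p → ℝ) : 0 ≤ v ⬝ᵥ v :=
  Finset.sum_nonneg fun i _ => mul_self_nonneg _

lemma en_nonneg {p : ℕ} (v : Fin p → ℝ) : 0 ≤ en v := Real.sqrt_nonneg _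

lemma sq_en {p : ℕ} (v : Fin p → ℝ) : en v ^ 2 = v ⬝ᵥ v := Real.sq_sqrt (dot_self_nonneg v)

lemma abs_dot_le {p : ℕ} (v w : Fin p → ℝ) : |v ⬝ᵥ w| ≤ en v * en w := by
  have h2 : (v ⬝ᵥ w) ^ 2 ≤ (v ⬝ᵥ v) * (w ⬝ᵥ w) := by
    simpa [dotProduct, pow_two, Finset.sum_mul_sq_le_sq_mul_sq] using
      Finset.sum_mul_sq_le_sq_mul_sq Finset.univ v w
  calc |v ⬝ᵥ w| = Real.sqrt ((v ⬝ᵥ w) ^ 2) := (Real.sqrt_sq_eq_abs _).symm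
    _ ≤ Real.sqrt ((v ⬝ᵥ v) * (w ⬝ᵥ w)) := Real.sqrt_le_sqrt h2
    _ = en v * en w := Real.sqrt_mul (dot_self_nonneg v) _

lemma dot_le {p : ℕ} (v w : Fin p → ℝ) : v ⬝ᵥ w ≤ en v * en w :=
  (le_abs_self _).trans (abs_dot_le v w)

lemma en_add_le {p : ℕ} (v w : Fin p → ℝ) : en (v + w) ≤ en v + en w := by
  have h : (v + w) ⬝ᵥ (v + w) = v ⬝ᵥ v + 2 * (v ⬝ᵥ w) + w ⬝ᵥ w := by
    simp [add_dotProduct, dotProduct_add, dotProduct_comm w v]; ring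
  have hle : (v + w) ⬝ᵥ (v + w) ≤ (en v + en w) ^ 2 := by
    rw [h]; nlinarith [dot_le v w, sq_en v, sq_en w]
  calc en (v + w) ≤ Real.sqrt ((en v + en w) ^ 2) := Real.sqrt_le_sqrt hle
    _ = |en v + en w| := Real.sqrt_sq_eq_abs _
    _ = en v + en w := abs_of_nonneg (add_nonneg (en_nonneg v) (en_nonneg w))

lemma continuous_qform {p : ℕ} (C : Matrix (Fin p) (Fin p) ℝ) :
    Continuous fun v : Fin p → ℝ => v ⬝ᵥ (C *ᵥ v) :=
  continuous_id.dotProduct (continuous_const.matrix_mulVec continuous_id)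

lemma exists_lam {p : ℕ} (hp : 0 < p) {C : Matrix (Fin p) (Fin p) ℝ} (hC : C.PosDef) :
    ∃ lam : ℝ, 0 < lam ∧ ∀ v : Fin p → ℝ, lam * (v ⬝ᵥ v) ≤ v ⬝ᵥ (C *ᵥ v) := by
  haveI : Nonempty (Fin p) := ⟨⟨0, hp⟩⟩
  have hne : ((fun _ => (1:ℝ)) : Fin p → ℝ) ∈ Metric.sphere (0 : Fin p → ℝ) 1 := by
    simp [mem_sphere_zero_iff_norm, pi_norm_const]
  obtain ⟨v0, hv0S, hmin⟩ := (isCompact_sphere (0 : Fin p → ℝ) 1).exists_isMinOn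
    ⟨_, hne⟩ (continuous_qform C).continuousOn
  have hv0 : ‖v0‖ = 1 := mem_sphere_zero_iff_norm.mp hv0S
  have hv0ne : v0 ≠ 0 := by intro h; rw [h] at hv0; simp at hv0
  have hlam' : 0 < v0 ⬝ᵥ (C *ᵥ v0) := by
    have := hC.dotProduct_mulVec_pos hv0ne
    simpa using this
  set lam' : ℝ := v0 ⬝ᵥ (C *ᵥ v0) with hlam'def
  refine ⟨lam' / p, div_pos hlam' (by exact_mod_cast hp), fun v => ?_⟩
  rcases eq_or_ne v 0 with rfl | hv
  · simp
  · set r : ℝ := ‖v‖ with hr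
    have hrpos : 0 < r := norm_pos_iff.mpr hv
    set u : Fin p → ℝ := r⁻¹ • v with hu
    have huS : u ∈ Metric.sphere (0 : Fin p → ℝ) 1 := by
      simp [hu, mem_sphere_zero_iff_norm, norm_smul, abs_of_pos (inv_pos.mpr hrpos),
        inv_mul_cancel₀ hrpos.ne', abs_of_pos hrpos]
      exact inv_mul_cancel₀ hrpos.ne'
    have hq : v ⬝ᵥ (C *ᵥ v) = r ^ 2 * (u ⬝ᵥ (C *ᵥ u)) := by
      have hvu : v = r • u := by
        rw [hu, smul_smul, mul_inv_cancel₀ hrpos.ne', one_smul]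
      rw [hvu]
      simp [smul_dotProduct, dotProduct_smul, Matrix.mulVec_smul, smul_eq_mul]
      ring
    have hqu : lam' ≤ u ⬝ᵥ (C *ᵥ u) := hmin huS
    have hdotle : v ⬝ᵥ v ≤ p * r ^ 2 := by
      have : ∀ i, v i * v i ≤ r ^ 2 := by
        intro i
        have h1 : |v i| ≤ r := norm_le_pi_norm v i
        nlinarith [abs_nonneg (v i), le_abs_self (v i), neg_abs_le (v i)]
      calc v ⬝ᵥ v = ∑ i, v i * v i := rfl
        _ ≤ ∑ _i : Fin p, r ^ 2 := Finset.sum_le_sum fun i _ => this i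
        _ = p * r ^ 2 := by simp [Finset.sum_const, mul_comm]
    calc lam' / p * (v ⬝ᵥ v) ≤ lam' / p * (p * r ^ 2) := by
          apply mul_le_mul_of_nonneg_left hdotle (le_of_lt (div_pos hlam' (by exact_mod_cast hp)))
      _ = lam' * r ^ 2 := by field_simp
      _ ≤ (u ⬝ᵥ (C *ᵥ u)) * r ^ 2 := by nlinarith
      _ = v ⬝ᵥ (C *ᵥ v) := by rw [hq]; ring

lemma integrable_gauss_eu (p : ℕ) :
    Integrable (fun x : EuclideanSpace ℝ (Fin p) => Real.exp (-(1/4) * ‖x‖ ^ 2)) := by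
  have h := (GaussianFourier.integrable_cexp_neg_mul_sq_norm_add
    (V := EuclideanSpace ℝ (Fin p)) (b := (1/4 : ℂ)) (by norm_num) 0 0).norm
  convert h using 2 with x
  simp [Complex.norm_exp]
  norm_cast

lemma lintegral_gauss_pi (p : ℕ) :
    ∫⁻ u : Fin p → ℝ, ENNReal.ofReal (Real.exp (-(1/4) * (u ⬝ᵥ u))) =
      ENNReal.ofReal ((4 * π) ^ ((p : ℝ) / 2)) := by
  have hmeas : Measurable fun u : Fin p → ℝ => ENNReal.ofReal (Real.exp (-(1/4) * (u ⬝ᵥ u))) := by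
    apply ENNReal.measurable_ofReal.comp
    exact (Real.continuous_exp.comp (continuous_const.mul
      (continuous_id.dotProduct continuous_id))).measurable
  rw [← (EuclideanSpace.volume_preserving_symm_measurableEquiv_toLp (Fin p)).lintegral_comp hmeas]
  have hdot : ∀ x : EuclideanSpace ℝ (Fin p),
      ((MeasurableEquiv.toLp 2 (Fin p → ℝ)).symm x) ⬝ᵥ ((MeasurableEquiv.toLp 2 (Fin p → ℝ)).symm x)
        = ‖x‖ ^ 2 := by
    intro x
    rw [EuclideanSpace.norm_eq, Real.sq_sqrt (by positivity)]
    simp [dotProduct, sq]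
  simp_rw [hdot]
  rw [← ofReal_integral_eq_lintegral_ofReal (integrable_gauss_eu p)
    (Filter.Eventually.of_forall fun x => (Real.exp_pos _).le)]
  rw [GaussianFourier.integral_rexp_neg_mul_sq_norm (by norm_num : (0:ℝ) < 1/4)]
  rw [show π / (1/4:ℝ) = 4 * π by ring, finrank_euclideanSpace_fin]

lemma meas_gaussA {p : ℕ} (A : Matrix (Fin p) (Fin p) ℝ) :
    Measurable fun v : Fin p → ℝ => ENNReal.ofReal (Real.exp (-(1/4) * (v ⬝ᵥ (A *ᵥ v)))) :=
  ENNReal.measurable_ofReal.comp (Real.continuous_exp.comp (continuous_const.mul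
    (continuous_id.dotProduct (continuous_const.matrix_mulVec continuous_id)))).measurable

open scoped MatrixOrder

lemma lintegral_gauss_matrix {p : ℕ} {A : Matrix (Fin p) (Fin p) ℝ} (hA : A.PosDef)
    (μ0 : Fin p → ℝ) (hgauss : ∫⁻ u : Fin p → ℝ, ENNReal.ofReal (Real.exp (-(1/4) * (u ⬝ᵥ u))) =
      ENNReal.ofReal ((4 * π) ^ ((p : ℝ) / 2))) :
    ∫⁻ β : Fin p → ℝ, ENNReal.ofReal (Real.exp (-(1/4) * ((β - μ0) ⬝ᵥ (A *ᵥ (β - μ0))))) =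
      ENNReal.ofReal ((Real.sqrt A.det)⁻¹ * (4 * π) ^ ((p : ℝ) / 2)) := by
  -- translation invariance
  have htrans : ∫⁻ β : Fin p → ℝ, ENNReal.ofReal (Real.exp (-(1/4) * ((β - μ0) ⬝ᵥ (A *ᵥ (β - μ0)))))
      = ∫⁻ v : Fin p → ℝ, ENNReal.ofReal (Real.exp (-(1/4) * (v ⬝ᵥ (A *ᵥ v)))) := by
    have := (measurePreserving_add_right (volume : Measure (Fin p → ℝ)) (-μ0)).lintegral_comp
      (meas_gaussA A)
    simp only [← sub_eq_add_neg] at this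
    exact this
  rw [htrans]
  -- square root of A
  set S := CFC.sqrt A with hSdef
  have hS2 : S * S = A := CFC.sqrt_mul_sqrt_self A hA.posSemidef.nonneg
  have hSsym : Sᵀ = S := by
    have h := (CFC.sqrt_nonneg A).posSemidef.1
    simpa [Matrix.IsHermitian, Matrix.conjTranspose_eq_transpose_of_trivial] using h
  have hdetS : S.det * S.det = A.det := by rw [← Matrix.det_mul, hS2]
  have hdetA : 0 < A.det := hA.det_pos
  have hdetSne : S.det ≠ 0 := by
    intro h; rw [h, mul_zero] at hdetS; exact hdetA.ne (hdetS)
  have habs : |S.det| = Real.sqrt A.det := by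
    rw [← hdetS, ← sq, Real.sqrt_sq_eq_abs]
  -- quadratic form as squared norm
  have hq : ∀ v : Fin p → ℝ, v ⬝ᵥ (A *ᵥ v) = (S *ᵥ v) ⬝ᵥ (S *ᵥ v) := by
    intro v
    rw [← hS2, ← Matrix.mulVec_mulVec, Matrix.dotProduct_mulVec]
    congr 1
    rw [← Matrix.mulVec_transpose, hSsym]
  simp_rw [hq]
  -- change of variables u = S v
  have hT : Measurable (Matrix.toLin' S) := LinearMap.continuous_of_finiteDimensional _ |>.measurable
  have hmap := Real.map_matrix_volume_pi_eq_smul_volume_pi hdetSne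
  have hcov : ∫⁻ v : Fin p → ℝ, ENNReal.ofReal (Real.exp (-(1/4) * ((S *ᵥ v) ⬝ᵥ (S *ᵥ v))))
      = ENNReal.ofReal |S.det|⁻¹ * ∫⁻ u : Fin p → ℝ, ENNReal.ofReal (Real.exp (-(1/4) * (u ⬝ᵥ u))) := by
    have hg0 : Measurable fun u : Fin p → ℝ => ENNReal.ofReal (Real.exp (-(1/4) * (u ⬝ᵥ u))) :=
      ENNReal.measurable_ofReal.comp (Real.continuous_exp.comp (continuous_const.mul
        (continuous_id.dotProduct continuous_id))).measurable
    have h1 := lintegral_map (μ := (volume : Measure (Fin p → ℝ)))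
      (f := fun u : Fin p → ℝ => ENNReal.ofReal (Real.exp (-(1/4) * (u ⬝ᵥ u)))) hg0 hT
    rw [hmap, lintegral_smul_measure] at h1
    simp only [Matrix.toLin'_apply] at h1
    rw [← h1, abs_inv, smul_eq_mul]
  rw [hcov, hgauss, habs, ← ENNReal.ofReal_mul (by positivity)]

lemma cosh_le_exp' {x : ℝ} (hx : 0 ≤ x) : Real.cosh x ≤ Real.exp x := by
  rw [Real.cosh_eq]
  have : Real.exp (-x) ≤ Real.exp x := Real.exp_le_exp.mpr (by linarith)
  linarith [Real.exp_pos x]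

lemma det_pref {x : ℝ} (hx : 0 < x) : (x⁻¹) ^ (-(1:ℝ)/2) = Real.sqrt x := by
  rw [show (-(1:ℝ)/2) = -(1/2) by ring, Real.rpow_neg (inv_nonneg.mpr hx.le),
    Real.inv_rpow hx.le, inv_inv, Real.sqrt_eq_rpow]

lemma young_ineq {lam e k : ℝ} (hlam : 0 < lam) (he : 0 ≤ e) :
    k * e ≤ lam * e ^ 2 / 4 + k ^ 2 / lam := by
  rw [div_add_div _ _ (by norm_num : (4:ℝ) ≠ 0) hlam.ne', le_div_iff₀ (by positivity)]
  nlinarith [sq_nonneg (lam * e - 2 * k)]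

lemma div_bound_aux {lam m V : ℝ} (hlam : 0 < lam) (hm : 0 < m)
    (h : lam * m ^ 2 ≤ m * V) : m ≤ V / lam := by
  rw [le_div_iff₀ hlam]
  nlinarith

/-- There is a constant c > 0, not depending on w, with
∫_{ℝᵖ} π(β|w)π(w|β) dβ ≤ c ∏ᵢ g(wᵢ) for all w ∈ (0,∞)ⁿ. -/
theorem stmt6 {n p : ℕ} (hn : 0 < n) (hp : 0 < p)
    (X : Matrix (Fin n) (Fin p) ℝ) (B : Matrix (Fin p) (Fin p) ℝ) (hB : B.PosDef)
    (b : Fin p → ℝ) (y : Fin n → ℝ) (hy : ∀ i, y i = 0 ∨ y i = 1) :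
    ∃ c : ℝ, 0 < c ∧ ∀ w : Fin n → ℝ, (∀ i, 0 < w i) →
      ∫⁻ β : Fin p → ℝ, ENNReal.ofReal (piBeta X B b y w β * piW X w β) ≤
        ENNReal.ofReal (c * ∏ i, pgDensity (w i)) := by
  obtain ⟨lam, hlam, hlamB⟩ := exists_lam hp hB.inv
  set v₀ : Fin p → ℝ := Xᵀ *ᵥ (fun i => y i - 1 / 2) + B⁻¹ *ᵥ b with hv₀
  set K : ℝ := (∑ i, en (X i)) / 2 with hKdef
  have hK0 : 0 ≤ K := by
    rw [hKdef]
    have : 0 ≤ ∑ i, en (X i) := Finset.sum_nonneg fun i _ => en_nonneg _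
    linarith
  set D : ℝ := K * (en v₀ / lam) + K ^ 2 / lam with hDdef
  set c : ℝ := Real.exp D * ((2 * π) ^ (-(p : ℝ) / 2) * (4 * π) ^ ((p : ℝ) / 2)) with hcdef
  have hπ : (0:ℝ) < π := Real.pi_pos
  have hc0 : 0 < c := by
    rw [hcdef]
    have h1 : (0:ℝ) < (2 * π) ^ (-(p : ℝ) / 2) := Real.rpow_pos_of_pos (by linarith) _
    have h2 : (0:ℝ) < (4 * π) ^ ((p : ℝ) / 2) := Real.rpow_pos_of_pos (by linarith) _
    positivity
  refine ⟨c, hc0, fun w hw => ?_⟩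
  -- matrix setup
  set A : Matrix (Fin p) (Fin p) ℝ := Xᵀ * Matrix.diagonal w * X + B⁻¹ with hAdef
  have hPSD : (Xᵀ * Matrix.diagonal w * X).PosSemidef := by
    have hD : (Matrix.diagonal w).PosSemidef :=
      Matrix.posSemidef_diagonal_iff.mpr fun i => (hw i).le
    have := hD.conjTranspose_mul_mul_same X
    simpa [Matrix.conjTranspose_eq_transpose_of_trivial] using this
  have hApd : A.PosDef := Matrix.PosDef.posSemidef_add hPSD hB.inv
  have hdetA : 0 < A.det := hApd.det_pos
  have hSig : sigmaMat X B w = A⁻¹ := by rw [sigmaMat, hAdef]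
  have hSiginv : (sigmaMat X B w)⁻¹ = A := by
    rw [hSig, Matrix.nonsing_inv_nonsing_inv _ hdetA.ne'.isUnit]
  have hdetSig : (sigmaMat X B w).det = A.det⁻¹ := by
    rw [hSig, Matrix.det_nonsing_inv, Ring.inverse_eq_inv]
  have hdetpref : (sigmaMat X B w).det ^ (-(1 : ℝ) / 2) = Real.sqrt A.det := by
    rw [hdetSig, det_pref hdetA]
  set μ0 : Fin p → ℝ := muVec X B b y w with hμ0
  have hAmu : A *ᵥ μ0 = v₀ := by
    rw [hμ0, muVec, hSig, Matrix.mulVec_mulVec, Matrix.mul_nonsing_inv _ hdetA.ne'.isUnit,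
      Matrix.one_mulVec, hv₀]
  have hqA : ∀ v : Fin p → ℝ, lam * (v ⬝ᵥ v) ≤ v ⬝ᵥ (A *ᵥ v) := by
    intro v
    have h1 : v ⬝ᵥ (A *ᵥ v)
        = v ⬝ᵥ ((Xᵀ * Matrix.diagonal w * X) *ᵥ v) + v ⬝ᵥ (B⁻¹ *ᵥ v) := by
      rw [hAdef, Matrix.add_mulVec, dotProduct_add]
    have h2 : 0 ≤ v ⬝ᵥ ((Xᵀ * Matrix.diagonal w * X) *ᵥ v) := by
      have := hPSD.dotProduct_mulVec_nonneg v
      simpa using this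
    have h3 := hlamB v
    linarith
  have hmu : en μ0 ≤ en v₀ / lam := by
    rcases (en_nonneg μ0).eq_or_lt with h | h
    · rw [← h]; exact div_nonneg (en_nonneg _) hlam.le
    · have h1 : lam * (μ0 ⬝ᵥ μ0) ≤ μ0 ⬝ᵥ v₀ := by
        have := hqA μ0; rw [hAmu] at this; exact this
      have h2 : μ0 ⬝ᵥ v₀ ≤ en μ0 * en v₀ := dot_le μ0 v₀
      apply div_bound_aux hlam h
      rw [sq_en]
      exact h1.trans h2
  -- pieces of piW
  set F : (Fin p → ℝ) → ℝ := fun β =>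
    ∏ i, (Real.cosh (|(X *ᵥ β) i| / 2) * Real.exp (-((X *ᵥ β) i) ^ 2 * w i / 2)) with hFdef
  have hF0 : ∀ β, 0 ≤ F β := fun β =>
    Finset.prod_nonneg fun i _ => by positivity
  have hsplit : ∀ β, piW X w β = F β * ∏ i, pgDensity (w i) := by
    intro β; rw [piW, hFdef, ← Finset.prod_mul_distrib]
  have hFle : ∀ β, F β ≤ Real.exp (K * en β) := by
    intro β
    have step1 : F β ≤ ∏ i, Real.exp (|(X *ᵥ β) i| / 2) := by
      apply Finset.prod_le_prod (fun i _ => by positivity)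
      intro i _
      have h1 : Real.exp (-((X *ᵥ β) i) ^ 2 * w i / 2) ≤ 1 := by
        apply Real.exp_le_one_iff.mpr
        have : 0 ≤ ((X *ᵥ β) i) ^ 2 * w i := mul_nonneg (sq_nonneg _) (hw i).le
        linarith
      calc Real.cosh (|(X *ᵥ β) i| / 2) * Real.exp (-((X *ᵥ β) i) ^ 2 * w i / 2)
          ≤ Real.cosh (|(X *ᵥ β) i| / 2) * 1 :=
            mul_le_mul_of_nonneg_left h1 (le_of_lt (Real.cosh_pos _))
        _ = Real.cosh (|(X *ᵥ β) i| / 2) := mul_one _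
        _ ≤ Real.exp (|(X *ᵥ β) i| / 2) := cosh_le_exp' (by positivity)
    have step2 : ∏ i, Real.exp (|(X *ᵥ β) i| / 2) = Real.exp (∑ i, |(X *ᵥ β) i| / 2) :=
      (Real.exp_sum _ _).symm
    have step3 : ∑ i, |(X *ᵥ β) i| / 2 ≤ K * en β := by
      have h1 : ∀ i, |(X *ᵥ β) i| / 2 ≤ en (X i) * en β / 2 := by
        intro i
        have : (X *ᵥ β) i = X i ⬝ᵥ β := rfl
        rw [this]
        have := abs_dot_le (X i) β
        linarith
      calc ∑ i, |(X *ᵥ β) i| / 2 ≤ ∑ i, en (X i) * en β / 2 :=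
            Finset.sum_le_sum fun i _ => h1 i
        _ = K * en β := by rw [hKdef, ← Finset.sum_div, ← Finset.sum_mul]; ring
    calc F β ≤ ∏ i, Real.exp (|(X *ᵥ β) i| / 2) := step1
      _ = Real.exp (∑ i, |(X *ᵥ β) i| / 2) := step2
      _ ≤ Real.exp (K * en β) := Real.exp_le_exp.mpr step3
  -- pointwise bound
  set C1 : ℝ := Real.exp D * (2 * π) ^ (-(p : ℝ) / 2) * Real.sqrt A.det with hC1def
  have hC10 : 0 ≤ C1 := by
    rw [hC1def]
    have : (0:ℝ) < (2 * π) ^ (-(p : ℝ) / 2) := Real.rpow_pos_of_pos (by linarith) _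
    positivity
  have hpt : ∀ β : Fin p → ℝ, piBeta X B b y w β * F β ≤
      C1 * Real.exp (-(1/4) * ((β - μ0) ⬝ᵥ (A *ᵥ (β - μ0)))) := by
    intro β
    set v : Fin p → ℝ := β - μ0 with hvdef
    set q : ℝ := v ⬝ᵥ (A *ᵥ v) with hqdef
    have hqB : lam * (v ⬝ᵥ v) ≤ q := hqA v
    have hβeq : β = μ0 + v := by rw [hvdef]; abel
    have hKen : K * en β ≤ D + q / 4 := by
      have ht : en β ≤ en μ0 + en v := by
        rw [hβeq]; exact en_add_le μ0 v
      have h1 : K * en β ≤ K * (en μ0 + en v) := mul_le_mul_of_nonneg_left ht hK0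
      have h1' : K * (en μ0 + en v) = K * en μ0 + K * en v := by ring
      have h2 : K * en μ0 ≤ K * (en v₀ / lam) := mul_le_mul_of_nonneg_left hmu hK0
      have h3 : K * en v ≤ lam * (en v ^ 2) / 4 + K ^ 2 / lam :=
        young_ineq hlam (en_nonneg v)
      have h4 : lam * (en v ^ 2) ≤ q := by rw [sq_en]; exact hqB
      rw [hDdef]; linarith
    have hExp : Real.exp (-(1/2) * q) * F β ≤ Real.exp D * Real.exp (-(1/4) * q) := by
      have h5 : F β ≤ Real.exp (D + q / 4) :=
        (hFle β).trans (Real.exp_le_exp.mpr hKen)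
      calc Real.exp (-(1/2) * q) * F β ≤ Real.exp (-(1/2) * q) * Real.exp (D + q / 4) :=
            mul_le_mul_of_nonneg_left h5 (Real.exp_pos _).le
        _ = Real.exp D * Real.exp (-(1/4) * q) := by
            rw [← Real.exp_add, ← Real.exp_add]; congr 1; ring
    have hpi : piBeta X B b y w β =
        (2 * π) ^ (-(p : ℝ) / 2) * Real.sqrt A.det * Real.exp (-(1/2) * q) := by
      rw [piBeta, hdetpref, hSiginv, ← hμ0, ← hvdef, ← hqdef]
    rw [hpi, hC1def]
    have hpos : (0:ℝ) ≤ (2 * π) ^ (-(p : ℝ) / 2) * Real.sqrt A.det := by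
      have : (0:ℝ) < (2 * π) ^ (-(p : ℝ) / 2) := Real.rpow_pos_of_pos (by linarith) _
      positivity
    calc (2 * π) ^ (-(p : ℝ) / 2) * Real.sqrt A.det * Real.exp (-(1/2) * q) * F β
        = (2 * π) ^ (-(p : ℝ) / 2) * Real.sqrt A.det * (Real.exp (-(1/2) * q) * F β) := by ring
      _ ≤ (2 * π) ^ (-(p : ℝ) / 2) * Real.sqrt A.det *
            (Real.exp D * Real.exp (-(1/4) * q)) := mul_le_mul_of_nonneg_left hExp hpos
      _ = Real.exp D * (2 * π) ^ (-(p : ℝ) / 2) * Real.sqrt A.det * Real.exp (-(1/4) * q) := by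
          ring
  -- nonnegativity of piBeta * F
  have hpB0 : ∀ β, 0 ≤ piBeta X B b y w β := by
    intro β
    rw [piBeta, hdetpref]
    have h1 : (0:ℝ) < (2 * π) ^ (-(p : ℝ) / 2) := Real.rpow_pos_of_pos (by linarith) _
    positivity
  rcases le_or_gt (∏ i, pgDensity (w i)) 0 with hG | hG
  · -- product of densities nonpositive: integrand vanishes
    have hz : ∀ β : Fin p → ℝ, piBeta X B b y w β * piW X w β ≤ 0 := by
      intro β
      have h1 : piW X w β ≤ 0 := by
        rw [hsplit β]
        exact mul_nonpos_iff.mpr (Or.inl ⟨hF0 β, hG⟩)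
      exact mul_nonpos_iff.mpr (Or.inl ⟨hpB0 β, h1⟩)
    have : ∀ β : Fin p → ℝ, ENNReal.ofReal (piBeta X B b y w β * piW X w β) = 0 := fun β =>
      ENNReal.ofReal_of_nonpos (hz β)
    simp only [this, lintegral_zero]
    exact zero_le
  · -- main case
    have hsqrtne : Real.sqrt A.det ≠ 0 := (Real.sqrt_pos.mpr hdetA).ne'
    have key : ∫⁻ β : Fin p → ℝ, ENNReal.ofReal (piBeta X B b y w β * F β) ≤
        ENNReal.ofReal c := by
      calc ∫⁻ β : Fin p → ℝ, ENNReal.ofReal (piBeta X B b y w β * F β)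
          ≤ ∫⁻ β : Fin p → ℝ,
              ENNReal.ofReal (C1 * Real.exp (-(1/4) * ((β - μ0) ⬝ᵥ (A *ᵥ (β - μ0))))) :=
            lintegral_mono fun β => ENNReal.ofReal_le_ofReal (hpt β)
        _ = ENNReal.ofReal C1 *
              ∫⁻ β : Fin p → ℝ,
                ENNReal.ofReal (Real.exp (-(1/4) * ((β - μ0) ⬝ᵥ (A *ᵥ (β - μ0))))) := by
            simp_rw [ENNReal.ofReal_mul hC10]
            exact lintegral_const_mul' _ _ ENNReal.ofReal_ne_top
        _ = ENNReal.ofReal C1 *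
              ENNReal.ofReal ((Real.sqrt A.det)⁻¹ * (4 * π) ^ ((p : ℝ) / 2)) := by
            rw [lintegral_gauss_matrix hApd μ0 (lintegral_gauss_pi p)]
        _ = ENNReal.ofReal (C1 * ((Real.sqrt A.det)⁻¹ * (4 * π) ^ ((p : ℝ) / 2))) :=
            (ENNReal.ofReal_mul hC10).symm
        _ = ENNReal.ofReal c := by
            congr 1
            rw [hC1def, hcdef]
            field_simp
    calc ∫⁻ β : Fin p → ℝ, ENNReal.ofReal (piBeta X B b y w β * piW X w β)
        = ∫⁻ β : Fin p → ℝ,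
            ENNReal.ofReal (piBeta X B b y w β * F β) * ENNReal.ofReal (∏ i, pgDensity (w i)) := by
          congr 1; funext β
          rw [hsplit β, ← mul_assoc, ENNReal.ofReal_mul (mul_nonneg (hpB0 β) (hF0 β))]
      _ = (∫⁻ β : Fin p → ℝ, ENNReal.ofReal (piBeta X B b y w β * F β)) *
            ENNReal.ofReal (∏ i, pgDensity (w i)) :=
          lintegral_mul_const' _ _ ENNReal.ofReal_ne_top
      _ ≤ ENNReal.ofReal c * ENNReal.ofReal (∏ i, pgDensity (w i)) :=
          mul_le_mul_left key _
      _ = ENNReal.ofReal (c * ∏ i, pgDensity (w i)) := (ENNReal.ofReal_mul hc0.le).symm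
end

section
/- Let n, p be positive integers, X an n×p real matrix, B a p×p symmetric positive definite matrix, b ∈ ℝᵖ, and y ∈ {0,1}ⁿ; set z = y − (1/2)1ₙ. There exists a finite constant c₁, not depending on β or w, such that for all β ∈ ℝᵖ and all w ∈ (0,∞)ⁿ, −(1/2)(β − μ(w))ᵀ Σ(w)⁻¹ (β − μ(w)) ≤ −(1/2)(β − (BXᵀz + b))ᵀ B⁻¹ (β − (BXᵀz + b)) + c₁. -/
open MeasureTheory Matrix Real

/-- With z = y − (1/2)1ₙ, there is a constant c₁ not depending on β or w such that
−(1/2)(β−μ(w))ᵀΣ(w)⁻¹(β−μ(w)) ≤ −(1/2)(β−(BXᵀz+b))ᵀB⁻¹(β−(BXᵀz+b)) + c₁. -/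
theorem stmt8 {n p : ℕ} (hn : 0 < n) (hp : 0 < p)
    (X : Matrix (Fin n) (Fin p) ℝ) (B : Matrix (Fin p) (Fin p) ℝ) (hB : B.PosDef)
    (b : Fin p → ℝ) (y : Fin n → ℝ) (hy : ∀ i, y i = 0 ∨ y i = 1) :
    ∃ c₁ : ℝ, ∀ (β : Fin p → ℝ) (w : Fin n → ℝ), (∀ i, 0 < w i) →
      -(1 / 2) *
          ((β - muVec X B b y w) ⬝ᵥ ((sigmaMat X B w)⁻¹ *ᵥ (β - muVec X B b y w))) ≤
        -(1 / 2) *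
            ((β - (B *ᵥ (Xᵀ *ᵥ (fun i => y i - 1 / 2)) + b)) ⬝ᵥ
              (B⁻¹ *ᵥ (β - (B *ᵥ (Xᵀ *ᵥ (fun i => y i - 1 / 2)) + b)))) + c₁ := by
  classical
  set z : Fin n → ℝ := fun i => y i - 1 / 2 with hzdef
  set v : Fin p → ℝ := Xᵀ *ᵥ z + B⁻¹ *ᵥ b with hvdef
  refine ⟨(1 / 2) * (v ⬝ᵥ (B *ᵥ v)), fun β w hw => ?_⟩
  set A : Matrix (Fin p) (Fin p) ℝ := Xᵀ * Matrix.diagonal w * X + B⁻¹ with hAdef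
  have hBinv : (B⁻¹).PosDef := hB.inv
  have hD : (Matrix.diagonal w).PosSemidef :=
    Matrix.posSemidef_diagonal_iff.mpr fun i => (hw i).le
  have hXDX : (Xᵀ * Matrix.diagonal w * X).PosSemidef := by
    simpa using hD.conjTranspose_mul_mul_same X
  have hApd : A.PosDef := Matrix.PosDef.posSemidef_add hXDX hBinv
  have hAunit : IsUnit A.det := isUnit_iff_ne_zero.mpr hApd.det_pos.ne'
  have hSigInv : (sigmaMat X B w)⁻¹ = A := by
    rw [sigmaMat, Matrix.nonsing_inv_nonsing_inv _ hAunit]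
  have hmu : muVec X B b y w = A⁻¹ *ᵥ v := rfl
  have hAmu : A *ᵥ muVec X B b y w = v := by
    rw [hmu, Matrix.mulVec_mulVec, Matrix.mul_nonsing_inv _ hAunit, Matrix.one_mulVec]
  have hAsymm : Aᵀ = A := hApd.isHermitian
  have hBsymm : Bᵀ = B := hB.isHermitian
  have hBinvsymm : (B⁻¹)ᵀ = B⁻¹ := hBinv.isHermitian
  -- symmetry trick: for symmetric M, u ⬝ᵥ M *ᵥ x = (M *ᵥ u) ⬝ᵥ x
  have symmdot : ∀ (M : Matrix (Fin p) (Fin p) ℝ), Mᵀ = M →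
      ∀ u x : Fin p → ℝ, u ⬝ᵥ (M *ᵥ x) = (M *ᵥ u) ⬝ᵥ x := by
    intro M hM u x
    rw [Matrix.dotProduct_mulVec, ← Matrix.mulVec_transpose, hM]
  -- m = B v
  have hm : B *ᵥ (Xᵀ *ᵥ z) + b = B *ᵥ v := by
    have hb : b = B *ᵥ (B⁻¹ *ᵥ b) := by
      rw [Matrix.mulVec_mulVec, Matrix.mul_nonsing_inv _
        (isUnit_iff_ne_zero.mpr hB.det_pos.ne'), Matrix.one_mulVec]
    rw [hvdef, Matrix.mulVec_add, ← hb]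
  have hBinvm : B⁻¹ *ᵥ (B *ᵥ v) = v := by
    rw [Matrix.mulVec_mulVec, Matrix.nonsing_inv_mul _
      (isUnit_iff_ne_zero.mpr hB.det_pos.ne'), Matrix.one_mulVec]
  -- expand LHS quadratic
  have hLHS : (β - muVec X B b y w) ⬝ᵥ ((sigmaMat X B w)⁻¹ *ᵥ (β - muVec X B b y w))
      = β ⬝ᵥ (A *ᵥ β) - 2 * (β ⬝ᵥ v) + muVec X B b y w ⬝ᵥ v := by
    rw [hSigInv, Matrix.mulVec_sub, dotProduct_sub, sub_dotProduct,
      sub_dotProduct, symmdot A hAsymm (muVec X B b y w) β, hAmu,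
      dotProduct_comm v β]
    ring
  -- expand RHS quadratic
  have hRHS : (β - (B *ᵥ (Xᵀ *ᵥ z) + b)) ⬝ᵥ (B⁻¹ *ᵥ (β - (B *ᵥ (Xᵀ *ᵥ z) + b)))
      = β ⬝ᵥ (B⁻¹ *ᵥ β) - 2 * (β ⬝ᵥ v) + v ⬝ᵥ (B *ᵥ v) := by
    rw [hm, Matrix.mulVec_sub, dotProduct_sub, sub_dotProduct,
      sub_dotProduct, hBinvm, symmdot B⁻¹ hBinvsymm (B *ᵥ v) β, hBinvm,
      dotProduct_comm v β, dotProduct_comm (B *ᵥ v) v]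
    ring
  -- key inequalities
  have h1 : β ⬝ᵥ (B⁻¹ *ᵥ β) ≤ β ⬝ᵥ (A *ᵥ β) := by
    have h0 : 0 ≤ β ⬝ᵥ ((Xᵀ * Matrix.diagonal w * X) *ᵥ β) := by
      have := hXDX.dotProduct_mulVec_nonneg β
      simpa using this
    have : β ⬝ᵥ (A *ᵥ β) = β ⬝ᵥ ((Xᵀ * Matrix.diagonal w * X) *ᵥ β) + β ⬝ᵥ (B⁻¹ *ᵥ β) := by
      rw [hAdef, Matrix.add_mulVec, dotProduct_add]
    linarith
  have h2 : 0 ≤ muVec X B b y w ⬝ᵥ v := by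
    have := hApd.posSemidef.inv.dotProduct_mulVec_nonneg v
    simp only [star_trivial] at this
    simpa [hmu, dotProduct_comm] using this
  rw [hLHS, hRHS]
  nlinarith [h1, h2]
end

section
/- Let (a_x)_{x≥1} and (b_x)_{x≥1} be strictly positive real sequences with ∑_{x≥1} a_x + ∑_{x≥1} b_x = 1, and set b₀ = 0. Define the transition probabilities k(x, x') = ∑_{y∈ℕ} π_{X|Y}(x'|y) π_{Y|X}(y|x) on ℕ = {1,2,3,…}. Then k has the birth-death form: k(1,1) = 1 − p₁; k(x, x+1) = p_x for x ≥ 1; k(x, x−1) = q_x for x ≥ 2; k(x, x) = r_x for x ≥ 2; and k(x, x') = 0 otherwise, where p_x = a_x b_x / ((a_x + b_{x−1})(a_x + b_x)), q_x = a_{x−1} b_{x−1} / ((a_x + b_{x−1})(a_{x−1} + b_{x−1})), and r_x = 1 − p_x − q_x. -/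
/-- Conditional mass function π_{X|Y}(x|y). -/
noncomputable def piXgY (a b : ℕ → ℝ) (x y : ℕ) : ℝ :=
  (a y / (a y + b y)) * (if x = y then 1 else 0) +
    (b y / (a y + b y)) * (if x = y + 1 then 1 else 0)

/-- Conditional mass function π_{Y|X}(y|x). -/
noncomputable def piYgX (a b : ℕ → ℝ) (y x : ℕ) : ℝ :=
  (a x / (a x + b (x - 1))) * (if y = x then 1 else 0) +
    (b (x - 1) / (a x + b (x - 1))) * (if y = x - 1 then 1 else 0)

/-- Transition probabilities k(x,x') = ∑_{y ∈ ℕ} π_{X|Y}(x'|y) π_{Y|X}(y|x),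
the sum running over y ∈ {1,2,3,…}. -/
noncomputable def kBD (a b : ℕ → ℝ) (x x' : ℕ) : ℝ :=
  ∑' y : ℕ, piXgY a b x' (y + 1) * piYgX a b (y + 1) x

/-- p_x = a_x b_x / ((a_x + b_{x−1})(a_x + b_x)). -/
noncomputable def pBD (a b : ℕ → ℝ) (x : ℕ) : ℝ :=
  a x * b x / ((a x + b (x - 1)) * (a x + b x))

/-- q_x = a_{x−1} b_{x−1} / ((a_x + b_{x−1})(a_{x−1} + b_{x−1})). -/
noncomputable def qBD (a b : ℕ → ℝ) (x : ℕ) : ℝ :=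
  a (x - 1) * b (x - 1) / ((a x + b (x - 1)) * (a (x - 1) + b (x - 1)))

/-- r_x = 1 − p_x − q_x. -/
noncomputable def rBD (a b : ℕ → ℝ) (x : ℕ) : ℝ := 1 - pBD a b x - qBD a b x

lemma kBD_eq (a b : ℕ → ℝ) (x x' : ℕ) (hx : 1 ≤ x) :
    kBD a b x x' = ∑ y ∈ ({x - 1, x - 2} : Finset ℕ),
      piXgY a b x' (y + 1) * piYgX a b (y + 1) x := by
  apply tsum_eq_sum
  intro y hy
  simp only [Finset.mem_insert, Finset.mem_singleton, not_or] at hy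
  have h1 : y + 1 ≠ x := by omega
  have h2 : y + 1 ≠ x - 1 := by omega
  simp [piYgX, h1, h2]

/-- The marginal chain of the two-component Gibbs sampler is a birth-death chain. -/
theorem stmt12 (a b : ℕ → ℝ) (ha : ∀ x, 1 ≤ x → 0 < a x) (hb : ∀ x, 1 ≤ x → 0 < b x)
    (hb0 : b 0 = 0)
    (hsa : Summable fun x : ℕ => a (x + 1)) (hsb : Summable fun x : ℕ => b (x + 1))
    (hsum : (∑' x : ℕ, a (x + 1)) + (∑' x : ℕ, b (x + 1)) = 1) :
    kBD a b 1 1 = 1 - pBD a b 1 ∧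
      (∀ x, 1 ≤ x → kBD a b x (x + 1) = pBD a b x) ∧
      (∀ x, 2 ≤ x → kBD a b x (x - 1) = qBD a b x) ∧
      (∀ x, 2 ≤ x → kBD a b x x = rBD a b x) ∧
      (∀ x x', 1 ≤ x → 1 ≤ x' → x' ≠ x → x' ≠ x + 1 → x' ≠ x - 1 → kBD a b x x' = 0) := by
  refine ⟨?_, ?_, ?_, ?_, ?_⟩
  · have h1 := ha 1 le_rfl
    have hb1 := hb 1 le_rfl
    rw [kBD_eq a b 1 1 le_rfl]
    simp [piXgY, piYgX, pBD, hb0]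
    have hd : b 1 + a 1 ≠ 0 := by positivity
    field_simp
    ring
  · intro x hx
    rw [kBD_eq a b x (x + 1) hx]
    rcases Nat.lt_or_ge x 2 with h | h
    · interval_cases x
      have h1 := ha 1 le_rfl
      have hb1 := hb 1 le_rfl
      simp [piXgY, piYgX, pBD, hb0]
      have hd : b 1 + a 1 ≠ 0 := by positivity
      field_simp
    · obtain ⟨n, rfl⟩ : ∃ n, x = n + 2 := ⟨x - 2, by omega⟩
      rw [Finset.sum_pair (show n + 2 - 1 ≠ n + 2 - 2 by omega)]
      have ha2 := ha (n + 2) (by omega)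
      have ha1 := ha (n + 1) (by omega)
      have hb2 := hb (n + 2) (by omega)
      have hb1 := hb (n + 1) (by omega)
      simp only [show (n + 2 - 1 : ℕ) = n + 1 from rfl, show (n + 2 - 2 : ℕ) = n from rfl,
        piXgY, piYgX, pBD]
      simp [show ¬ (n + 3 = n + 2) by omega, show ¬ (n + 3 = n + 1) by omega,
        show (n + 1 - 1 : ℕ) = n from rfl]
      have hd1 : a (n + 2) + b (n + 1) ≠ 0 := by positivity
      have hd2 : a (n + 2) + b (n + 2) ≠ 0 := by positivity
      field_simp
  · intro x hx
    rw [kBD_eq a b x (x - 1) (by omega)]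
    obtain ⟨n, rfl⟩ : ∃ n, x = n + 2 := ⟨x - 2, by omega⟩
    rw [Finset.sum_pair (show n + 2 - 1 ≠ n + 2 - 2 by omega)]
    have ha2 := ha (n + 2) (by omega)
    have ha1 := ha (n + 1) (by omega)
    have hb1 := hb (n + 1) (by omega)
    simp only [show (n + 2 - 1 : ℕ) = n + 1 from rfl, show (n + 2 - 2 : ℕ) = n from rfl,
      piXgY, piYgX, qBD]
    simp [show ¬ (n + 1 = n + 2) by omega, show ¬ (n + 1 = n + 3) by omega,
      show (n + 1 - 1 : ℕ) = n from rfl]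
    have hd1 : a (n + 2) + b (n + 1) ≠ 0 := by positivity
    have hd2 : a (n + 1) + b (n + 1) ≠ 0 := by positivity
    field_simp
  · intro x hx
    rw [kBD_eq a b x x (by omega), rBD]
    obtain ⟨n, rfl⟩ : ∃ n, x = n + 2 := ⟨x - 2, by omega⟩
    rw [Finset.sum_pair (show n + 2 - 1 ≠ n + 2 - 2 by omega)]
    have ha2 := ha (n + 2) (by omega)
    have ha1 := ha (n + 1) (by omega)
    have hb2 := hb (n + 2) (by omega)
    have hb1 := hb (n + 1) (by omega)
    simp only [show (n + 2 - 1 : ℕ) = n + 1 from rfl, show (n + 2 - 2 : ℕ) = n from rfl,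
      piXgY, piYgX, pBD, qBD]
    simp [show ¬ (n + 2 = n + 1) by omega, show ¬ (n + 2 = n + 3) by omega,
      show (n + 1 - 1 : ℕ) = n from rfl]
    have hd1 : a (n + 2) + b (n + 1) ≠ 0 := by positivity
    have hd2 : a (n + 2) + b (n + 2) ≠ 0 := by positivity
    have hd3 : a (n + 1) + b (n + 1) ≠ 0 := by positivity
    field_simp
    ring
  · intro x x' hx hx' h1 h2 h3
    rw [kBD_eq a b x x' hx]
    apply Finset.sum_eq_zero
    intro y hy
    simp only [Finset.mem_insert, Finset.mem_singleton] at hy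
    have e1 : x' ≠ x := h1
    have e2 : x' ≠ x + 1 := h2
    rcases hy with rfl | rfl
    · have : x - 1 + 1 = x := by omega
      rw [this]
      simp [piXgY, e1, e2]
    · rcases Nat.lt_or_ge x 2 with h | h
      · have : x - 2 + 1 = x := by omega
        rw [this]
        simp [piXgY, e1, e2]
      · have e3 : x' ≠ x - 2 + 1 := by omega
        have e4 : x' ≠ x - 2 + 1 + 1 := by omega
        simp [piXgY, e3, e4]
end
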